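/- arXiv:2007.01896 — 3 statements merged into one kernel-verified Lean document; each statement's English description precedes it below -/
import Mathlib

section
/- (Regime C image chain) For every real parameter b with 3 < b < 4: the image of the full state set {0,1,...,63} under the update map t_b equals {0, 5, 10, 17, 20, 23, 29, 34, 40, 43, 46, 53, 58, 63}, and the image of the full state set under t_b ∘ t_b equals {0, 23, 29, 43, 46, 53, 58, 63}. -/
/-- Von Neumann neighbourhoods on the 2×3 toroidal lattice.
Index `i : Fin 6` represents cell `i+1`, so `N(1)={2,3,5}` becomes `nbrs 0 = {1,2,4}`, etc. -/
def nbrs : Fin 6 → Finset (Fin 6)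
  | 0 => {1, 2, 4}
  | 1 => {0, 3, 5}
  | 2 => {0, 3, 4}
  | 3 => {1, 2, 5}
  | 4 => {0, 2, 5}
  | 5 => {1, 3, 4}

lemma nbrs_nonempty (i : Fin 6) : (nbrs i).Nonempty := by
  fin_cases i <;> simp [nbrs]

/-- Pairwise payoff to the first argument; `true` = cooperate, `false` = defect. -/
def pay (b : ℝ) : Bool → Bool → ℝ
  | false, false => 1
  | false, true  => b
  | true,  false => 0
  | true,  true  => 3

/-- Net payoff of cell `i` in state `σ`. -/
def payoff (b : ℝ) (σ : Fin 6 → Bool) (i : Fin 6) : ℝ :=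
  ∑ j ∈ nbrs i, pay b (σ i) (σ j)

/- Synchronous update map `t_b` on states: if the best payoff `m` among the
neighbours of cell `i` satisfies `m ≤ P_b(σ,i)` the cell keeps its strategy;
otherwise it cooperates iff some maximally-paid neighbour cooperates. -/
open scoped Classical in
noncomputable def update (b : ℝ) (σ : Fin 6 → Bool) : Fin 6 → Bool := fun i =>
  let m := (nbrs i).sup' (nbrs_nonempty i) fun j => payoff b σ j
  if m ≤ payoff b σ i then σ i
  else if ∃ j ∈ nbrs i, payoff b σ j = m ∧ σ j = true then true else false

-- rank
def rank (s : Bool) (c : ℕ) : ℕ :=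
  if s then [0,1,3,5].getD c 0 else [1,2,4,6].getD c 0

def val (b : ℝ) (s : Bool) (c : ℕ) : ℝ :=
  if s then 3 * (c : ℝ) else (3 - (c : ℝ)) + (c : ℝ) * b

def rk (σ : Fin 6 → Bool) (i : Fin 6) : ℕ :=
  rank (σ i) (∑ j ∈ nbrs i, (σ j).toNat)

lemma card_nbrs (i : Fin 6) : (nbrs i).card = 3 := by fin_cases i <;> rfl

lemma cnt_le (σ : Fin 6 → Bool) (i : Fin 6) : (∑ j ∈ nbrs i, (σ j).toNat) ≤ 3 := by
  calc (∑ j ∈ nbrs i, (σ j).toNat) ≤ ∑ j ∈ nbrs i, 1 :=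
        Finset.sum_le_sum (fun j _ => by cases σ j <;> simp)
    _ = 3 := by rw [Finset.sum_const, card_nbrs]; rfl

lemma payoff_eq (b : ℝ) (σ : Fin 6 → Bool) (i : Fin 6) :
    payoff b σ i = val b (σ i) (∑ j ∈ nbrs i, (σ j).toNat) := by
  unfold payoff val
  cases h : σ i
  · simp only [if_neg Bool.false_ne_true]
    have h1 : ∀ t : Bool, pay b false t = (1 - (t.toNat : ℝ)) + (t.toNat : ℝ) * b := by
      rintro (_|_) <;> simp [pay]
    rw [Finset.sum_congr rfl (fun j _ => h1 (σ j))]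
    rw [Finset.sum_add_distrib, Finset.sum_sub_distrib, ← Finset.sum_mul,
      Finset.sum_const, card_nbrs]
    push_cast
    ring
  · simp only [if_pos rfl]
    have h1 : ∀ t : Bool, pay b true t = 3 * (t.toNat : ℝ) := by
      rintro (_|_) <;> simp [pay]
    rw [Finset.sum_congr rfl (fun j _ => h1 (σ j)), ← Finset.mul_sum]
    push_cast
    ring

lemma val_le_iff {b : ℝ} (hb1 : 3 < b) (hb2 : b < 4) {s1 s2 : Bool} {c1 c2 : ℕ}
    (h1 : c1 ≤ 3) (h2 : c2 ≤ 3) :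
    (val b s1 c1 ≤ val b s2 c2 ↔ rank s1 c1 ≤ rank s2 c2) := by
  interval_cases c1 <;> interval_cases c2 <;> cases s1 <;> cases s2 <;>
    simp [val, rank] <;> first | linarith | nlinarith | norm_num

lemma payoff_le_iff {b : ℝ} (hb1 : 3 < b) (hb2 : b < 4) (σ : Fin 6 → Bool) (i j : Fin 6) :
    (payoff b σ i ≤ payoff b σ j ↔ rk σ i ≤ rk σ j) := by
  rw [payoff_eq, payoff_eq]
  exact val_le_iff hb1 hb2 (cnt_le σ i) (cnt_le σ j)

def updateC (σ : Fin 6 → Bool) : Fin 6 → Bool := fun i =>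
  let m := (nbrs i).sup' (nbrs_nonempty i) fun j => rk σ j
  if m ≤ rk σ i then σ i
  else if ∃ j ∈ nbrs i, rk σ j = m ∧ σ j = true then true else false

lemma update_eq {b : ℝ} (hb1 : 3 < b) (hb2 : b < 4) (σ : Fin 6 → Bool) :
    update b σ = updateC σ := by
  funext i
  unfold update updateC
  simp only
  have hcond : ((nbrs i).sup' (nbrs_nonempty i) (fun j => payoff b σ j) ≤ payoff b σ i)
      ↔ ((nbrs i).sup' (nbrs_nonempty i) (fun j => rk σ j) ≤ rk σ i) := by
    rw [Finset.sup'_le_iff, Finset.sup'_le_iff]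
    exact forall_congr' fun j => imp_congr_right fun _ => payoff_le_iff hb1 hb2 σ j i
  have hmax : ∀ j ∈ nbrs i,
      ((payoff b σ j = (nbrs i).sup' (nbrs_nonempty i) fun k => payoff b σ k)
      ↔ (rk σ j = (nbrs i).sup' (nbrs_nonempty i) fun k => rk σ k)) := by
    intro j hj
    rw [le_antisymm_iff, le_antisymm_iff]
    have h1 : payoff b σ j ≤ (nbrs i).sup' (nbrs_nonempty i) fun k => payoff b σ k :=
      Finset.le_sup' _ hj
    have h2 : rk σ j ≤ (nbrs i).sup' (nbrs_nonempty i) fun k => rk σ k :=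
      Finset.le_sup' _ hj
    simp only [h1, h2, and_true, true_and]
    rw [Finset.sup'_le_iff, Finset.sup'_le_iff]
    exact forall_congr' fun k => imp_congr_right fun _ => payoff_le_iff hb1 hb2 σ k j
  have hex : (∃ j ∈ nbrs i, (payoff b σ j = (nbrs i).sup' (nbrs_nonempty i) fun k => payoff b σ k) ∧ σ j = true)
      ↔ (∃ j ∈ nbrs i, (rk σ j = (nbrs i).sup' (nbrs_nonempty i) fun k => rk σ k) ∧ σ j = true) := by
    constructor
    · rintro ⟨j, hj, h, hc⟩; exact ⟨j, hj, (hmax j hj).mp h, hc⟩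
    · rintro ⟨j, hj, h, hc⟩; exact ⟨j, hj, (hmax j hj).mpr h, hc⟩
  by_cases h1 : (nbrs i).sup' (nbrs_nonempty i) (fun j => rk σ j) ≤ rk σ i
  · rw [if_pos (hcond.mpr h1), if_pos h1]
  · rw [if_neg (fun h => h1 (hcond.mp h)), if_neg h1]
    by_cases h2 : ∃ j ∈ nbrs i, (rk σ j = (nbrs i).sup' (nbrs_nonempty i) fun k => rk σ k) ∧ σ j = true
    · rw [if_pos (hex.mpr h2), if_pos h2]
    · rw [if_neg (fun h => h2 (hex.mp h)), if_neg h2]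

/-- Decode an integer `0 ≤ n < 64` into a state: cell 1 is the most significant bit,
bit value 1 = cooperate. -/
def dec (n : ℕ) : Fin 6 → Bool := fun i => n.testBit (5 - i.val)

/-- Encode a state as an integer via `n = Σ β(i)·2^(6−i)`. -/
def enc (σ : Fin 6 → Bool) : ℕ := ∑ i : Fin 6, if σ i then 2 ^ (5 - i.val) else 0

/-- The update map `t_b` acting on integer-coded states. -/
noncomputable def T (b : ℝ) (n : ℕ) : ℕ := enc (update b (dec n))

def Tnat (n : ℕ) : ℕ := enc (updateC (dec n))

lemma T_eq {b : ℝ} (hb1 : 3 < b) (hb2 : b < 4) (n : ℕ) : T b n = Tnat n := by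
  unfold T Tnat
  rw [update_eq hb1 hb2]

theorem stmt8 : ∀ b : ℝ, 3 < b → b < 4 →
    (Finset.range 64).image (T b)
      = ({0, 5, 10, 17, 20, 23, 29, 34, 40, 43, 46, 53, 58, 63} : Finset ℕ) ∧
    (Finset.range 64).image (fun n => T b (T b n))
      = ({0, 23, 29, 43, 46, 53, 58, 63} : Finset ℕ) := by
  intro b hb1 hb2
  have h1 : (Finset.range 64).image (T b) = (Finset.range 64).image Tnat :=
    Finset.image_congr (fun n _ => T_eq hb1 hb2 n)
  have h2 : (Finset.range 64).image (fun n => T b (T b n))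
      = (Finset.range 64).image (fun n => Tnat (Tnat n)) :=
    Finset.image_congr (fun n _ => by simp only [T_eq hb1 hb2])
  rw [h1, h2]
  constructor <;> decide
end

section
/- (Regime D reaches equilibrium in one step) For b = 3, the update map is idempotent, t_3 ∘ t_3 = t_3; equivalently, the image of the full state set {0,1,...,63} under t_3 equals the set of fixed points of t_3, namely {0, 23, 29, 31, 43, 46, 47, 53, 55, 58, 59, 61, 62, 63}. -/
-- Natural-number (computable) versions of the payoff and update maps for b = 3.
def payN : Bool → Bool → ℕ
  | false, false => 1
  | false, true  => 3
  | true,  false => 0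
  | true,  true  => 3

def payoffN (σ : Fin 6 → Bool) (i : Fin 6) : ℕ := ∑ j ∈ nbrs i, payN (σ i) (σ j)

def updateN (σ : Fin 6 → Bool) : Fin 6 → Bool := fun i =>
  let m := (nbrs i).sup' (nbrs_nonempty i) fun j => payoffN σ j
  if m ≤ payoffN σ i then σ i
  else if ∃ j ∈ nbrs i, payoffN σ j = m ∧ σ j = true then true else false

lemma pay3 (x y : Bool) : pay 3 x y = (payN x y : ℝ) := by
  cases x <;> cases y <;> simp [pay, payN]

lemma payoff3 (σ : Fin 6 → Bool) (i : Fin 6) : payoff 3 σ i = (payoffN σ i : ℝ) := by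
  simp [payoff, payoffN, pay3]

lemma sup_cast (σ : Fin 6 → Bool) (i : Fin 6) :
    ((nbrs i).sup' (nbrs_nonempty i) fun j => payoff 3 σ j)
      = (((nbrs i).sup' (nbrs_nonempty i) fun j => payoffN σ j : ℕ) : ℝ) := by
  rw [Finset.comp_sup'_eq_sup'_comp (nbrs_nonempty i) (Nat.cast : ℕ → ℝ)
    (fun x y => by simp [Nat.cast_max])]
  simp [Function.comp, payoff3]

lemma sup_cast' (σ : Fin 6 → Bool) (i : Fin 6) :
    ((nbrs i).sup' (nbrs_nonempty i) fun j => ((payoffN σ j : ℕ) : ℝ))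
      = (((nbrs i).sup' (nbrs_nonempty i) fun j => payoffN σ j : ℕ) : ℝ) := by
  rw [Finset.comp_sup'_eq_sup'_comp (nbrs_nonempty i) (Nat.cast : ℕ → ℝ)
    (fun x y => by simp [Nat.cast_max])]
  rfl

lemma update3_eq : update 3 = updateN := by
  funext σ i
  simp only [update, updateN]
  have h1 : ((nbrs i).sup' (nbrs_nonempty i) fun j => payoff 3 σ j) ≤ payoff 3 σ i ↔
      ((nbrs i).sup' (nbrs_nonempty i) fun j => payoffN σ j) ≤ payoffN σ i := by
    rw [sup_cast, payoff3, Nat.cast_le]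
  have h2 : (∃ j ∈ nbrs i, payoff 3 σ j =
      ((nbrs i).sup' (nbrs_nonempty i) fun j => payoff 3 σ j) ∧ σ j = true) ↔
      (∃ j ∈ nbrs i, payoffN σ j =
      ((nbrs i).sup' (nbrs_nonempty i) fun j => payoffN σ j) ∧ σ j = true) := by
    simp only [payoff3, sup_cast']
    simp only [Nat.cast_inj]
  exact if_congr h1 rfl (if_congr h2 rfl rfl)

def TN (n : ℕ) : ℕ := enc (updateN (dec n))

lemma T3_eq : T 3 = TN := by funext n; simp [T, TN, update3_eq]

theorem stmt12 :
    update 3 ∘ update 3 = update 3 ∧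
    (Finset.range 64).image (T 3) = (Finset.range 64).filter (fun n => T 3 n = n) ∧
    (Finset.range 64).filter (fun n => T 3 n = n)
      = ({0, 23, 29, 31, 43, 46, 47, 53, 55, 58, 59, 61, 62, 63} : Finset ℕ) := by
  rw [update3_eq, T3_eq]
  refine ⟨?_, ?_, ?_⟩ <;> decide
end

section
/- (Constancy of the dynamics within regimes) The update map t_b is constant on each open parameter regime: for all real b, b′ with b > 4 and b′ > 4, t_b = t_{b′} as maps on the 64 states; and for all real b, b′ with 3 < b < 4 and 3 < b′ < 4, t_b = t_{b′} as maps on the 64 states. -/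
-- aux
def cnt (σ : Fin 6 → Bool) (i : Fin 6) : ℕ := ((nbrs i).filter (fun j => σ j = true)).card

def Aint (σ : Fin 6 → Bool) (i : Fin 6) : ℤ := if σ i then 3 * cnt σ i else 3 - cnt σ i
def Cint (σ : Fin 6 → Bool) (i : Fin 6) : ℤ := if σ i then 0 else cnt σ i

lemma payoff_eq_s14 (b : ℝ) (σ : Fin 6 → Bool) (i : Fin 6) :
    payoff b σ i = (Aint σ i : ℝ) + b * (Cint σ i : ℝ) := by
  unfold payoff Aint Cint cnt
  cases h : σ i
  · simp only [h, Bool.false_eq_true, if_false]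
    have : ∀ j, pay b false (σ j) = (b - 1) * (if σ j = true then (1:ℝ) else 0) + 1 := by
      intro j; cases σ j <;> simp [pay]
    rw [Finset.sum_congr rfl (fun j _ => this j), Finset.sum_add_distrib, ← Finset.mul_sum,
      Finset.sum_boole, Finset.sum_const, card_nbrs]
    push_cast
    ring
  · simp only [h, if_true]
    have : ∀ j, pay b true (σ j) = 3 * (if σ j = true then (1:ℝ) else 0) := by
      intro j; cases σ j <;> simp [pay]
    rw [Finset.sum_congr rfl (fun j _ => this j), ← Finset.mul_sum, Finset.sum_boole]
    push_cast; ring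

def inv4 (e d : ℤ) : Prop :=
  d = 0 ∨ (0 < d ∧ 0 ≤ e + 4 * d) ∨ (d < 0 ∧ e + 4 * d ≤ 0)

def inv34 (e d : ℤ) : Prop :=
  d = 0 ∨ (0 ≤ e + 3 * d ∧ 0 ≤ e + 4 * d) ∨ (e + 3 * d ≤ 0 ∧ e + 4 * d ≤ 0)

instance (e d : ℤ) : Decidable (inv4 e d) := by unfold inv4; infer_instance
instance (e d : ℤ) : Decidable (inv34 e d) := by unfold inv34; infer_instance

lemma inv_check : ∀ (σ : Fin 6 → Bool) (i j k : Fin 6), j ∈ insert i (nbrs i) →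
    k ∈ insert i (nbrs i) →
    inv4 (Aint σ k - Aint σ j) (Cint σ k - Cint σ j) ∧
    inv34 (Aint σ k - Aint σ j) (Cint σ k - Cint σ j) := by decide

lemma real_inv4 {e d : ℤ} (h : inv4 e d) {b b' : ℝ} (hb : 4 < b) (hb' : 4 < b') :
    (0 ≤ (e : ℝ) + b * d ↔ 0 ≤ (e : ℝ) + b' * d) := by
  have key : ∀ c : ℝ, 4 < c → (0 ≤ (e : ℝ) + c * d ↔
      (((d:ℝ) = 0 ∧ 0 ≤ (e:ℝ)) ∨ ((0:ℝ) < d ∧ 0 ≤ (e:ℝ) + 4 * d))) := by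
    intro c hc
    rcases h with h | ⟨h1, h2⟩ | ⟨h1, h2⟩
    · have hd : (d : ℝ) = 0 := by exact_mod_cast h
      rw [hd]
      constructor
      · intro hx; left; constructor; rfl; linarith
      · rintro (⟨_, he⟩ | ⟨hd2, _⟩)
        · linarith
        · linarith
    · have h1' : (0:ℝ) < d := by exact_mod_cast h1
      have h2' : (0:ℝ) ≤ (e:ℝ) + 4 * d := by exact_mod_cast h2
      constructor
      · intro _; right; exact ⟨h1', h2'⟩
      · intro _; nlinarith [mul_pos (show (0:ℝ) < c - 4 by linarith) h1']
    · have h1' : (d:ℝ) < 0 := by exact_mod_cast h1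
      have h2' : ((e:ℝ) + 4 * d) ≤ 0 := by exact_mod_cast h2
      constructor
      · intro hx; exfalso
        nlinarith [mul_neg_of_pos_of_neg (show (0:ℝ) < c - 4 by linarith) h1']
      · rintro (⟨hd, _⟩ | ⟨hd, _⟩) <;> linarith
  rw [key b hb, key b' hb']

lemma real_inv34 {e d : ℤ} (h : inv34 e d) {b b' : ℝ} (hb3 : 3 < b) (hb4 : b < 4)
    (hb3' : 3 < b') (hb4' : b' < 4) :
    (0 ≤ (e : ℝ) + b * d ↔ 0 ≤ (e : ℝ) + b' * d) := by
  have key : ∀ c : ℝ, 3 < c → c < 4 → (0 ≤ (e : ℝ) + c * d ↔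
      (((d:ℝ) = 0 ∧ 0 ≤ (e:ℝ)) ∨
        (0 ≤ (e:ℝ) + 3 * d ∧ 0 ≤ (e:ℝ) + 4 * d ∧ (d:ℝ) ≠ 0))) := by
    intro c hc3 hc4
    rcases h with h | ⟨h1, h2⟩ | ⟨h1, h2⟩
    · have hd : (d : ℝ) = 0 := by exact_mod_cast h
      rw [hd]
      constructor
      · intro hx; left; constructor; rfl; linarith
      · rintro (⟨_, he⟩ | ⟨_, _, hd2⟩)
        · linarith
        · exact absurd rfl hd2
    · have h1' : (0:ℝ) ≤ (e:ℝ) + 3 * d := by exact_mod_cast h1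
      have h2' : (0:ℝ) ≤ (e:ℝ) + 4 * d := by exact_mod_cast h2
      constructor
      · intro _
        by_cases hd : (d:ℝ) = 0
        · left; refine ⟨hd, ?_⟩; rw [hd] at h1'; linarith
        · right; exact ⟨h1', h2', hd⟩
      · intro _
        nlinarith [mul_nonneg (show (0:ℝ) ≤ 4 - c by linarith) h1',
          mul_nonneg (show (0:ℝ) ≤ c - 3 by linarith) h2']
    · have h1' : ((e:ℝ) + 3 * d) ≤ 0 := by exact_mod_cast h1
      have h2' : ((e:ℝ) + 4 * d) ≤ 0 := by exact_mod_cast h2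
      constructor
      · intro hx
        have h3 : (0:ℝ) ≤ (e:ℝ) + 3 * d := by
          nlinarith [mul_nonpos_of_nonneg_of_nonpos (show (0:ℝ) ≤ c - 3 by linarith) h2',
            show (0:ℝ) < 4 - c by linarith]
        have h4 : (0:ℝ) ≤ (e:ℝ) + 4 * d := by
          nlinarith [mul_nonpos_of_nonneg_of_nonpos (show (0:ℝ) ≤ 4 - c by linarith) h1',
            show (0:ℝ) < c - 3 by linarith]
        have hd : (d:ℝ) = 0 := by linarith
        left; refine ⟨hd, ?_⟩; rw [hd] at h3; linarith
      · rintro (⟨hd, he⟩ | ⟨hx, hy, hz⟩)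
        · have : c * (d:ℝ) = 0 := by rw [hd]; ring
          linarith
        · have : (d:ℝ) = 0 := by linarith
          exact absurd this hz
  rw [key b hb3 hb4, key b' hb3' hb4']

lemma comp_inv4 {b b' : ℝ} (hb : 4 < b) (hb' : 4 < b') (σ : Fin 6 → Bool) (i j k : Fin 6)
    (hj : j ∈ insert i (nbrs i)) (hk : k ∈ insert i (nbrs i)) :
    (payoff b σ j ≤ payoff b σ k ↔ payoff b' σ j ≤ payoff b' σ k) := by
  rw [payoff_eq_s14, payoff_eq_s14, payoff_eq_s14, payoff_eq_s14]
  have h := (inv_check σ i j k hj hk).1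
  have := real_inv4 h hb hb' (e := Aint σ k - Aint σ j) (d := Cint σ k - Cint σ j)
  push_cast at this
  constructor <;> intro hx
  · nlinarith [this.mp (by nlinarith)]
  · nlinarith [this.mpr (by nlinarith)]

lemma comp_inv34 {b b' : ℝ} (hb3 : 3 < b) (hb4 : b < 4) (hb3' : 3 < b') (hb4' : b' < 4)
    (σ : Fin 6 → Bool) (i j k : Fin 6)
    (hj : j ∈ insert i (nbrs i)) (hk : k ∈ insert i (nbrs i)) :
    (payoff b σ j ≤ payoff b σ k ↔ payoff b' σ j ≤ payoff b' σ k) := by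
  rw [payoff_eq_s14, payoff_eq_s14, payoff_eq_s14, payoff_eq_s14]
  have h := (inv_check σ i j k hj hk).2
  have := real_inv34 h hb3 hb4 hb3' hb4' (e := Aint σ k - Aint σ j) (d := Cint σ k - Cint σ j)
  push_cast at this
  constructor <;> intro hx
  · nlinarith [this.mp (by nlinarith)]
  · nlinarith [this.mpr (by nlinarith)]

open scoped Classical in
lemma update_congr {b b' : ℝ} (σ : Fin 6 → Bool)
    (H : ∀ i j k : Fin 6, j ∈ insert i (nbrs i) → k ∈ insert i (nbrs i) →
      (payoff b σ j ≤ payoff b σ k ↔ payoff b' σ j ≤ payoff b' σ k)) :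
    update b σ = update b' σ := by
  funext i
  unfold update
  simp only []
  have hmem : ∀ j ∈ nbrs i, j ∈ insert i (nbrs i) := fun j hj => Finset.mem_insert_of_mem hj
  have hself : i ∈ insert i (nbrs i) := Finset.mem_insert_self _ _
  have h1 : ((nbrs i).sup' (nbrs_nonempty i) fun j => payoff b σ j) ≤ payoff b σ i ↔
      ((nbrs i).sup' (nbrs_nonempty i) fun j => payoff b' σ j) ≤ payoff b' σ i := by
    rw [Finset.sup'_le_iff, Finset.sup'_le_iff]
    exact forall₂_congr fun j hj => H i j i (hmem j hj) hself
  have h2 : (∃ j ∈ nbrs i, payoff b σ j = ((nbrs i).sup' (nbrs_nonempty i) fun j => payoff b σ j)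
      ∧ σ j = true) ↔
      (∃ j ∈ nbrs i, payoff b' σ j = ((nbrs i).sup' (nbrs_nonempty i) fun j => payoff b' σ j)
      ∧ σ j = true) := by
    have key : ∀ (c : ℝ) (j : Fin 6), j ∈ nbrs i →
        ((payoff c σ j = (nbrs i).sup' (nbrs_nonempty i) fun j => payoff c σ j) ↔
          ∀ k ∈ nbrs i, payoff c σ k ≤ payoff c σ j) := by
      intro c j hj
      constructor
      · intro hEq k hk
        rw [hEq]
        exact Finset.le_sup' _ hk
      · intro hle
        exact le_antisymm (Finset.le_sup' _ hj) (Finset.sup'_le _ _ hle)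
    apply exists_congr; intro j
    constructor
    · rintro ⟨hj, hEq, hc⟩
      refine ⟨hj, ((key b' j hj).mpr ?_), hc⟩
      intro k hk
      exact (H i k j (hmem k hk) (hmem j hj)).mp (((key b j hj).mp hEq) k hk)
    · rintro ⟨hj, hEq, hc⟩
      refine ⟨hj, ((key b j hj).mpr ?_), hc⟩
      intro k hk
      exact (H i k j (hmem k hk) (hmem j hj)).mpr (((key b' j hj).mp hEq) k hk)
  exact if_congr h1 rfl (if_congr h2 rfl rfl)

theorem stmt14 :
    (∀ b b' : ℝ, 4 < b → 4 < b' → update b = update b') ∧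
    (∀ b b' : ℝ, 3 < b → b < 4 → 3 < b' → b' < 4 → update b = update b') := by
  constructor
  · intro b b' hb hb'
    funext σ
    exact update_congr σ (fun i j k hj hk => comp_inv4 hb hb' σ i j k hj hk)
  · intro b b' hb3 hb4 hb3' hb4'
    funext σ
    exact update_congr σ (fun i j k hj hk => comp_inv34 hb3 hb4 hb3' hb4' σ i j k hj hk)
end
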